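/- Let X be a Banach space with α(X*) > ᾱ > 0. For every δ ∈ (0,2), every x ∈ S_X, x* ∈ S_{X*} with Re x*(x) > 1-δ, and every k ∈ (0,1/2], there exists (y,y*) ∈ Π(X) with ‖x-y‖ ≤ δ/k and ‖x*-y*‖ ≤ 2k - (2/3)kᾱ. -/

import Mathlib

open Filter Topology

/-- The parameter of uniform non-squareness of a normed space. -/
noncomputable def unsqParam (X : Type*) [NormedAddCommGroup X] [NormedSpace ℝ X] : ℝ :=
  2 - sSup {r : ℝ | ∃ u v : X, ‖u‖ ≤ 1 ∧ ‖v‖ ≤ 1 ∧ r = (‖u + v‖ + ‖u - v‖) / 2}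

private lemma core_arith {k α ε sb r : ℝ} (hk0 : 0 < k) (hα0 : 0 < α) (hα1 : α ≤ 1)
    (hε0 : 0 < ε) (hεk : ε ≤ k) (hsb0 : 0 ≤ sb) (hsb : sb ≤ ε)
    (h : 2*k - 2/3*k*α < ε + sb)
    (key : ε*r ≤ ε*(ε+sb)*(2-α) - sb*(ε+sb)) :
    r ≤ 2*k - 2/3*k*α := by
  have ha : 0 ≤ sb - k*(1-2*α/3) := by linarith
  have hb : 0 ≤ sb + k*(1-2*α/3) - k*(1-α) := by nlinarith [mul_le_mul_of_nonneg_left hα1 hk0.le]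
  have hQ : 0 ≤ sb^2 - k*(1-α)*sb + k^2*α/3 := by
    nlinarith [mul_nonneg ha hb, mul_nonneg (mul_nonneg (sq_nonneg k) hα0.le)
      (by linarith : (0:ℝ) ≤ 3 - α)]
  have final : ε*(ε+sb)*(2-α) - sb*(ε+sb) ≤ ε*(2*k - 2/3*k*α) := by
    nlinarith [mul_nonneg hε0.le hQ,
      mul_nonneg (mul_nonneg (mul_nonneg hk0.le hε0.le) (by linarith : (0:ℝ) ≤ 2-α))
        (by linarith : (0:ℝ) ≤ k-ε),
      mul_nonneg (sq_nonneg sb) (by linarith : (0:ℝ) ≤ k-ε)]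
  exact le_of_mul_le_mul_left (key.trans final) hε0

private lemma arith_lemma {k α ε s A B r : ℝ} (hk0 : 0 < k) (hα0 : 0 < α) (hα1 : α ≤ 1)
    (hε0 : 0 < ε) (hεk : ε ≤ k) (hs1 : s ≤ ε) (hs2 : -ε ≤ s)
    (hA0 : 0 ≤ A) (hB0 : 0 ≤ B) (hAB : A + B ≤ 4 - 2*α)
    (hA : ε - s ≤ ε * A) (hB : ε + s ≤ ε * B)
    (hr1 : r ≤ (ε + s)/2 * A + (ε - s)/2 * B) (hr2 : r ≤ ε + |s|) :
    r ≤ 2*k - 2/3*k*α := by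
  rcases le_or_gt (ε + |s|) (2*k - 2/3*k*α) with h | h
  · linarith
  rcases le_or_gt 0 s with hs | hs
  · rw [abs_of_nonneg hs] at h
    have key : ε*r ≤ ε*(ε+s)*(2-α) - s*(ε+s) := by
      have e1 : (ε+s)/2 * A ≤ (ε+s)/2 * (4 - 2*α - B) :=
        mul_le_mul_of_nonneg_left (by linarith) (by linarith)
      have e2 : r ≤ (ε+s)*(2-α) - s*B := by nlinarith [e1, hr1]
      have e3 : s*(ε+s) ≤ s*(ε*B) := mul_le_mul_of_nonneg_left hB hs
      nlinarith [mul_le_mul_of_nonneg_left e2 hε0.le, e3]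
    exact core_arith hk0 hα0 hα1 hε0 hεk hs hs1 h key
  · rw [abs_of_neg hs] at h
    have key : ε*r ≤ ε*(ε+(-s))*(2-α) - (-s)*(ε+(-s)) := by
      have e1 : (ε-s)/2 * B ≤ (ε-s)/2 * (4 - 2*α - A) :=
        mul_le_mul_of_nonneg_left (by linarith) (by linarith)
      have e2 : r ≤ (ε-s)*(2-α) + s*A := by nlinarith [e1, hr1]
      have e3 : s*(ε*A) ≤ s*(ε-s) := mul_le_mul_of_nonpos_left hA hs.le
      nlinarith [mul_le_mul_of_nonneg_left e2 hε0.le, e3]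
    exact core_arith hk0 hα0 hα1 hε0 hεk (by linarith) (by linarith) (by linarith) key

private lemma phelps_max {X : Type*} [NormedAddCommGroup X] [NormedSpace ℝ X] [CompleteSpace X]
    (f : X →L[ℝ] ℝ) {k : ℝ} (hk0 : 0 < k) {x : X} (hx : ‖x‖ ≤ 1) :
    ∃ y : X, ‖y‖ ≤ 1 ∧ k * ‖y - x‖ ≤ f y - f x ∧
      ∀ z : X, ‖z‖ ≤ 1 → k * ‖z - y‖ ≤ f z - f y → z = y := by
  classical
  have key : ∀ (n : ℕ) (a : {z : X // ‖z‖ ≤ 1}), ∃ b : {z : X // ‖z‖ ≤ 1},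
      k * ‖(b : X) - a‖ ≤ f b - f a ∧
      ∀ c : {z : X // ‖z‖ ≤ 1}, k * ‖(c : X) - a‖ ≤ f c - f a → f c ≤ f b + (1/2)^n := by
    intro n a
    set M : Set {z : X // ‖z‖ ≤ 1} := {c | k * ‖(c : X) - a‖ ≤ f c - f a} with hM
    have haM : a ∈ M := by simp [hM]
    have hbdd : BddAbove ((fun c : {z : X // ‖z‖ ≤ 1} => f c) '' M) := by
      refine ⟨‖f‖, ?_⟩
      rintro r ⟨c, _, rfl⟩
      calc f c ≤ |f (c : X)| := le_abs_self _
        _ = ‖f (c : X)‖ := rfl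
        _ ≤ ‖f‖ * ‖(c : X)‖ := f.le_opNorm _
        _ ≤ ‖f‖ * 1 := mul_le_mul_of_nonneg_left c.2 (norm_nonneg f)
        _ = ‖f‖ := mul_one _
    have hne : ((fun c : {z : X // ‖z‖ ≤ 1} => f c) '' M).Nonempty := ⟨f a, a, haM, rfl⟩
    have hlt : sSup ((fun c : {z : X // ‖z‖ ≤ 1} => f c) '' M) - (1/2:ℝ)^n
        < sSup ((fun c : {z : X // ‖z‖ ≤ 1} => f c) '' M) := by
      have : (0:ℝ) < (1/2)^n := by positivity
      linarith
    obtain ⟨w, ⟨b, hbM, rfl⟩, hw⟩ := exists_lt_of_lt_csSup hne hlt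
    refine ⟨b, hbM, fun c hc => ?_⟩
    have hc' : f c ≤ sSup ((fun c : {z : X // ‖z‖ ≤ 1} => f c) '' M) := le_csSup hbdd ⟨c, hc, rfl⟩
    linarith
  choose step hstep1 hstep2 using key
  let seq : ℕ → {z : X // ‖z‖ ≤ 1} := fun n => Nat.rec ⟨x, hx⟩ (fun m ih => step m ih) n
  have hseqS : ∀ n, seq (n+1) = step n (seq n) := fun n => rfl
  have hseq0 : seq 0 = ⟨x, hx⟩ := rfl
  have chain : ∀ n m, n ≤ m → k * ‖(seq m).1 - (seq n).1‖ ≤ f (seq m).1 - f (seq n).1 := by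
    intro n m h
    induction h with
    | refl => simp
    | @step m h ih =>
      have h1 := hstep1 m (seq m)
      rw [← hseqS m] at h1
      have tri : ‖(seq (m+1)).1 - (seq n).1‖
          ≤ ‖(seq (m+1)).1 - (seq m).1‖ + ‖(seq m).1 - (seq n).1‖ := by
        simpa [dist_eq_norm] using dist_triangle (seq (m+1)).1 (seq m).1 (seq n).1
      have h2 := mul_le_mul_of_nonneg_left tri hk0.le
      rw [mul_add] at h2
      linarith
  have hmono : Monotone (fun n => f (seq n).1) := by
    intro n m h
    have := chain n m h
    have h0 : 0 ≤ k * ‖(seq m).1 - (seq n).1‖ := mul_nonneg hk0.le (norm_nonneg _)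
    simp only
    linarith
  have hbdd : ∀ n, f (seq n).1 ≤ ‖f‖ := by
    intro n
    calc f (seq n).1 ≤ |f (seq n).1| := le_abs_self _
      _ = ‖f (seq n).1‖ := rfl
      _ ≤ ‖f‖ * ‖(seq n).1‖ := f.le_opNorm _
      _ ≤ ‖f‖ * 1 := mul_le_mul_of_nonneg_left (seq n).2 (norm_nonneg f)
      _ = ‖f‖ := mul_one _
  have hconvR : ∃ L, Tendsto (fun n => f (seq n).1) atTop (nhds L) :=
    ⟨_, tendsto_atTop_ciSup hmono ⟨‖f‖, by rintro r ⟨n, rfl⟩; exact hbdd n⟩⟩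
  obtain ⟨L, hL⟩ := hconvR
  have hcauchyR : CauchySeq (fun n => f (seq n).1) := hL.cauchySeq
  have hcauchy : CauchySeq (fun n => (seq n).1) := by
    rw [Metric.cauchySeq_iff] at hcauchyR ⊢
    intro εp hεp
    obtain ⟨N, hN⟩ := hcauchyR (k*εp) (by positivity)
    refine ⟨N, fun m hm n hn => ?_⟩
    have key2 : ∀ p q, N ≤ p → N ≤ q → q ≤ p → dist (seq p).1 (seq q).1 < εp := by
      intro p q hp hq hpq
      have h1 := chain q p hpq
      have h2 := hN p hp q hq
      rw [Real.dist_eq] at h2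
      have h3 : f (seq p).1 - f (seq q).1 ≤ |f (seq p).1 - f (seq q).1| := le_abs_self _
      rw [dist_eq_norm]
      nlinarith [norm_nonneg ((seq p).1 - (seq q).1)]
    rcases le_total n m with h | h
    · exact key2 m n hm hn h
    · rw [dist_comm]; exact key2 n m hn hm h
  obtain ⟨y, hy⟩ := cauchySeq_tendsto_of_complete hcauchy
  have hy1 : ‖y‖ ≤ 1 := le_of_tendsto hy.norm (Filter.Eventually.of_forall fun n => (seq n).2)
  have hyn : ∀ n, k * ‖y - (seq n).1‖ ≤ f y - f (seq n).1 := by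
    intro n
    have h1 : Tendsto (fun m => k * ‖(seq m).1 - (seq n).1‖) atTop
        (nhds (k * ‖y - (seq n).1‖)) := ((hy.sub_const _).norm.const_mul k)
    have h2 : Tendsto (fun m => f (seq m).1 - f (seq n).1) atTop (nhds (f y - f (seq n).1)) :=
      ((f.continuous.tendsto y).comp hy).sub_const _
    exact le_of_tendsto_of_tendsto h1 h2 (eventually_atTop.2 ⟨n, fun m hm => chain n m hm⟩)
  refine ⟨y, hy1, by have := hyn 0; rwa [hseq0] at this, ?_⟩
  intro z hz hzy
  have hzn : ∀ n, k * ‖z - (seq n).1‖ ≤ f z - f (seq n).1 := by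
    intro n
    have tri : ‖z - (seq n).1‖ ≤ ‖z - y‖ + ‖y - (seq n).1‖ := by
      simpa [dist_eq_norm] using dist_triangle z y (seq n).1
    have h2 := mul_le_mul_of_nonneg_left tri hk0.le
    rw [mul_add] at h2
    have := hyn n
    linarith
  have hfz : ∀ n, f z ≤ f y + (1/2:ℝ)^n := by
    intro n
    have h2 := hstep2 n (seq n) ⟨z, hz⟩ (hzn n)
    have h3 : f (step n (seq n)).1 ≤ f y := by
      have h4 := hyn (n+1)
      rw [hseqS n] at h4
      have h0 : 0 ≤ k * ‖y - (step n (seq n)).1‖ :=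
        mul_nonneg hk0.le (norm_nonneg _)
      linarith
    have h5 : f z ≤ f (step n (seq n)).1 + (1/2:ℝ)^n := h2
    linarith
  have hfz' : f z ≤ f y := by
    have hlim : Tendsto (fun n => f y + (1/2:ℝ)^n) atTop (nhds (f y)) := by
      simpa using tendsto_const_nhds.add
        (tendsto_pow_atTop_nhds_zero_of_lt_one (by norm_num) (by norm_num : (1/2:ℝ) < 1))
    exact ge_of_tendsto hlim (Filter.Eventually.of_forall hfz)
  have hz0 : k * ‖z - y‖ ≤ 0 := hzy.trans (by linarith)
  have h6 : ‖z - y‖ ≤ 0 := by nlinarith [norm_nonneg (z - y)]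
  exact sub_eq_zero.mp (norm_le_zero_iff.mp h6)

private lemma support_fn {X : Type*} [NormedAddCommGroup X] [NormedSpace ℝ X]
    (f : X →L[ℝ] ℝ) {k : ℝ} (hk0 : 0 < k) {y : X} (hy : ‖y‖ ≤ 1)
    (hmax : ∀ z : X, ‖z‖ ≤ 1 → f z - f y ≤ k * ‖z - y‖) :
    ∃ v : X →L[ℝ] ℝ, ‖v‖ ≤ k ∧ ∀ z : X, ‖z‖ ≤ 1 → f z - v z ≤ f y - v y := by
  classical
  set P : Set X := {c | ∃ t : ℝ, ∃ z : X, 0 ≤ t ∧ ‖z‖ ≤ 1 ∧ c = t • (z - y)} with hP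
  have hPf : ∀ c ∈ P, f c ≤ k * ‖c‖ := by
    rintro c ⟨t, z, ht, hz, rfl⟩
    rw [map_smul, norm_smul, Real.norm_eq_abs, abs_of_nonneg ht, smul_eq_mul]
    have h1 : f (z - y) ≤ k * ‖z - y‖ := by rw [map_sub]; exact hmax z hz
    have h2 := mul_le_mul_of_nonneg_left h1 ht
    nlinarith
  have hPconv : Convex ℝ P := by
    rintro c₁ ⟨t₁, z₁, ht₁, hz₁, rfl⟩ c₂ ⟨t₂, z₂, ht₂, hz₂, rfl⟩ a b ha hb hab
    rcases eq_or_lt_of_le (add_nonneg (mul_nonneg ha ht₁) (mul_nonneg hb ht₂)) with hT | hT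
    · have h1 : a*t₁ = 0 := by nlinarith [mul_nonneg ha ht₁, mul_nonneg hb ht₂]
      have h2 : b*t₂ = 0 := by nlinarith [mul_nonneg ha ht₁, mul_nonneg hb ht₂]
      refine ⟨0, y, le_refl 0, hy, ?_⟩
      rw [smul_smul, smul_smul, h1, h2, zero_smul, zero_smul, add_zero, zero_smul]
    · set T := a*t₁ + b*t₂ with hTdef
      set z : X := T⁻¹ • ((a*t₁) • z₁ + (b*t₂) • z₂) with hzdef
      have hTz : T • z = (a*t₁) • z₁ + (b*t₂) • z₂ := smul_inv_smul₀ (ne_of_gt hT) _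
      have hznorm : ‖z‖ ≤ 1 := by
        have h1 : ‖(a*t₁) • z₁ + (b*t₂) • z₂‖ ≤ (a*t₁) * ‖z₁‖ + (b*t₂) * ‖z₂‖ := by
          refine (norm_add_le _ _).trans ?_
          rw [norm_smul, norm_smul, Real.norm_eq_abs, Real.norm_eq_abs,
            abs_of_nonneg (mul_nonneg ha ht₁), abs_of_nonneg (mul_nonneg hb ht₂)]
      
        have h2 : (a*t₁) * ‖z₁‖ + (b*t₂) * ‖z₂‖ ≤ T := by
          have := mul_le_mul_of_nonneg_left hz₁ (mul_nonneg ha ht₁)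
          have := mul_le_mul_of_nonneg_left hz₂ (mul_nonneg hb ht₂)
          rw [hTdef]; nlinarith
        rw [hzdef, norm_smul, Real.norm_eq_abs, abs_of_pos (inv_pos.2 hT)]
        calc T⁻¹ * ‖(a*t₁) • z₁ + (b*t₂) • z₂‖ ≤ T⁻¹ * T := by
              apply mul_le_mul_of_nonneg_left (h1.trans h2) (inv_pos.2 hT).le
          _ = 1 := inv_mul_cancel₀ (ne_of_gt hT)
      refine ⟨T, z, hT.le, hznorm, ?_⟩
      rw [smul_sub T z y, hTz, hTdef]
      module
  set Aset : Set (X × ℝ) := {p | k * ‖p.1‖ < p.2} with hAset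
  have hAopen : IsOpen Aset := isOpen_lt (continuous_const.mul continuous_fst.norm) continuous_snd
  have hAconv : Convex ℝ Aset := by
    rintro p hp q hq a b ha hb hab
    simp only [hAset, Set.mem_setOf_eq] at hp hq ⊢
    have h1 : ‖(a • p + b • q).1‖ ≤ a*‖p.1‖ + b*‖q.1‖ := by
      have : (a • p + b • q).1 = a • p.1 + b • q.1 := rfl
      rw [this]
      refine (norm_add_le _ _).trans ?_
      rw [norm_smul, norm_smul, Real.norm_eq_abs, Real.norm_eq_abs, abs_of_nonneg ha,
        abs_of_nonneg hb]
    have h2 : (a • p + b • q).2 = a * p.2 + b * q.2 := rfl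
    rw [h2]
    rcases ha.eq_or_lt with rfl | ha'
    · have hb1 : b = 1 := by linarith
      subst hb1
      have := mul_le_mul_of_nonneg_left h1 hk0.le
      simp only [zero_mul, one_mul, zero_add] at *
      nlinarith
    · have e1 : a * (k * ‖p.1‖) < a * p.2 := by exact (mul_lt_mul_iff_right₀ ha').2 hp
      have e2 : b * (k * ‖q.1‖) ≤ b * q.2 := mul_le_mul_of_nonneg_left hq.le hb
      have := mul_le_mul_of_nonneg_left h1 hk0.le
      nlinarith
  set Bset : Set (X × ℝ) := {p | p.1 ∈ P ∧ p.2 ≤ f p.1} with hBset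
  have hBconv : Convex ℝ Bset := by
    rintro p hp q hq a b ha hb hab
    refine ⟨hPconv hp.1 hq.1 ha hb hab, ?_⟩
    have h2 : (a • p + b • q).2 = a * p.2 + b * q.2 := rfl
    have h3 : f ((a • p + b • q).1) = a * f p.1 + b * f q.1 := by
      have : (a • p + b • q).1 = a • p.1 + b • q.1 := rfl
      rw [this, map_add, map_smul, map_smul, smul_eq_mul, smul_eq_mul]
    rw [h2, h3]
    exact add_le_add (mul_le_mul_of_nonneg_left hp.2 ha) (mul_le_mul_of_nonneg_left hq.2 hb)
  have hdisj : Disjoint Aset Bset := by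
    rw [Set.disjoint_left]
    rintro p hpA ⟨hp1, hp2⟩
    have := hPf p.1 hp1
    simp only [hAset, Set.mem_setOf_eq] at hpA
    linarith
  obtain ⟨φ, u₀, hφA, hφB⟩ := geometric_hahn_banach_open hAconv hAopen hBconv hdisj
  have hsplit : ∀ (z : X) (r : ℝ), φ (z, r) = φ (z, 0) + r * φ (0, 1) := by
    intro z r
    have h1 : (z, r) = (z, (0:ℝ)) + r • ((0:X), (1:ℝ)) := by
      simp [Prod.ext_iff]
    rw [h1, map_add, map_smul, smul_eq_mul]
  have hβ : φ (0,1) < u₀ := by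
    have h1 : ((0:X), (1:ℝ)) ∈ Aset := by simp [hAset]
    simpa using hφA _ h1
  have hu₀0 : u₀ ≤ 0 := by
    have h1 : ((0:X), (0:ℝ)) ∈ Bset := ⟨⟨0, y, le_refl 0, hy, by simp⟩, by simp⟩
    have := hφB _ h1
    simpa [Prod.mk_zero_zero] using this
  have hβneg : φ ((0:X),(1:ℝ)) < 0 := lt_of_lt_of_le hβ hu₀0
  have hu₀0' : 0 ≤ u₀ := by
    by_contra hcon
    push_neg at hcon
    set r := u₀ / (2 * φ ((0:X),(1:ℝ))) with hrdef
    have hr : 0 < r := div_pos_of_neg_of_neg hcon (by linarith)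
    have hmem : ((0:X), r) ∈ Aset := by simp [hAset, hr]
    have h1 := hφA _ hmem
    rw [hsplit] at h1
    have hβne : φ ((0:X),(1:ℝ)) ≠ 0 := ne_of_lt hβneg
    have h2 : r * φ ((0:X),(1:ℝ)) = u₀ / 2 := by
      rw [hrdef]; field_simp
    simp only [Prod.mk_zero_zero, map_zero] at h1
    rw [h2] at h1
    linarith
  have hu₀ : u₀ = 0 := le_antisymm hu₀0 hu₀0'
  set β := φ ((0:X), (1:ℝ)) with hβdef
  set ψ : X →L[ℝ] ℝ := φ.comp (ContinuousLinearMap.inl ℝ X ℝ) with hψdef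
  have hψ : ∀ z : X, ψ z = φ (z, 0) := fun z => rfl
  set v : X →L[ℝ] ℝ := (-β)⁻¹ • ψ with hvdef
  have hβpos : 0 < -β := by rw [hβdef]; linarith
  have hψv : ∀ h : X, ψ h = (-β) * v h := by
    intro h
    have : v h = (-β)⁻¹ * ψ h := rfl
    rw [this, ← mul_assoc, mul_inv_cancel₀ (ne_of_gt hβpos), one_mul]
  have hvle : ∀ h : X, v h ≤ k * ‖h‖ := by
    intro h
    by_contra hcon
    push_neg at hcon
    have hmem : (h, v h) ∈ Aset := hcon
    have h1 := hφA _ hmem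
    rw [hsplit, hu₀, ← hψ, hψv h] at h1
    have hid : -β * v h + v h * β = 0 := by ring
    linarith
  have hvge : ∀ c ∈ P, f c ≤ v c := by
    intro c hc
    have h1 := hφB (c, f c) ⟨hc, le_rfl⟩
    rw [hsplit, hu₀, ← hψ, hψv c] at h1
    nlinarith [hβpos, h1]
  refine ⟨v, ?_, ?_⟩
  · refine v.opNorm_le_bound hk0.le (fun h => ?_)
    rw [Real.norm_eq_abs, abs_le]
    constructor
    · have h1 := hvle (-h)
      rw [map_neg, norm_neg] at h1
      linarith
    · exact hvle h
  · intro z hz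
    have h1 : f (z - y) ≤ v (z - y) := hvge _ ⟨1, z, zero_le_one, hz, by rw [one_smul]⟩
    rw [map_sub, map_sub] at h1
    linarith

set_option maxHeartbeats 1000000 in
theorem main_lemma_non_square (X : Type*) [NormedAddCommGroup X] [NormedSpace ℝ X]
    [CompleteSpace X] (α : ℝ) (hα0 : 0 < α) (hα : α < unsqParam (X →L[ℝ] ℝ))
    (δ : ℝ) (hδ : δ ∈ Set.Ioo (0:ℝ) 2)
    (x : X) (f : X →L[ℝ] ℝ) (hx : ‖x‖ = 1) (hf : ‖f‖ = 1) (hfx : f x > 1 - δ)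
    (k : ℝ) (hk : k ∈ Set.Ioc (0:ℝ) (1/2)) :
    ∃ y : X, ∃ g : X →L[ℝ] ℝ, ‖y‖ = 1 ∧ ‖g‖ = 1 ∧ g y = 1 ∧
      ‖x - y‖ ≤ δ / k ∧ ‖f - g‖ ≤ 2 * k - 2/3 * k * α := by
  obtain ⟨hk0, hk2⟩ := hk
  obtain ⟨hδ0, hδ2⟩ := hδ
  -- non-squareness facts about the dual
  set S : Set ℝ := {r : ℝ | ∃ u v : X →L[ℝ] ℝ, ‖u‖ ≤ 1 ∧ ‖v‖ ≤ 1 ∧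
    r = (‖u + v‖ + ‖u - v‖) / 2} with hSdef
  have hSbdd : BddAbove S := by
    refine ⟨2, ?_⟩
    rintro r ⟨u, v, hu, hv, rfl⟩
    have h1 := norm_add_le u v
    have h2 := norm_sub_le u v
    linarith
  have hsup : sSup S < 2 - α := by
    have : unsqParam (X →L[ℝ] ℝ) = 2 - sSup S := rfl
    rw [this] at hα
    linarith
  have hS1 : (1:ℝ) ∈ S := by
    refine ⟨f, 0, le_of_eq hf, by simp, ?_⟩
    simp [hf]
  have hα1 : α < 1 := by
    have := le_csSup hSbdd hS1
    linarith
  have hpair : ∀ u v : X →L[ℝ] ℝ, ‖u‖ ≤ 1 → ‖v‖ ≤ 1 → ‖u + v‖ + ‖u - v‖ ≤ 4 - 2*α := by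
    intro u v hu hv
    have h1 : (‖u + v‖ + ‖u - v‖)/2 ≤ sSup S := le_csSup hSbdd ⟨u, v, hu, hv, rfl⟩
    linarith
  clear hα hsup hS1 hSbdd
  clear hSdef
  clear S
  -- Phelps
  obtain ⟨y, hy1, hxy, hymax⟩ := phelps_max f hk0 (le_of_eq hx)
  have hmax' : ∀ z : X, ‖z‖ ≤ 1 → f z - f y ≤ k * ‖z - y‖ := by
    intro z hz
    by_contra hcon
    push_neg at hcon
    have hzy := hymax z hz hcon.le
    rw [hzy] at hcon
    simp only [sub_self, norm_zero, mul_zero] at hcon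
    exact lt_irrefl 0 hcon
  have hfy1 : f y ≤ 1 := by
    calc f y ≤ |f y| := le_abs_self _
      _ = ‖f y‖ := rfl
      _ ≤ ‖f‖ * ‖y‖ := f.le_opNorm y
      _ ≤ 1 * 1 := by rw [hf]; exact mul_le_mul_of_nonneg_left hy1 zero_le_one
      _ = 1 := one_mul 1
  have hxyδ : ‖x - y‖ ≤ δ / k := by
    rw [le_div_iff₀ hk0]
    have h1 : k * ‖y - x‖ ≤ f y - f x := hxy
    rw [norm_sub_rev x y]
    nlinarith
  -- sign-corrected almost-norming elements
  have hsign : ∀ r : ℝ, r < 1 → ∃ e : X, ‖e‖ ≤ 1 ∧ r < f e := by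
    intro r hr
    obtain ⟨z, hz1, hz2⟩ := f.exists_lt_apply_of_lt_opNorm (r := r) (by rw [hf]; exact hr)
    rcases le_or_gt 0 (f z) with h | h
    · exact ⟨z, hz1.le, by rwa [Real.norm_eq_abs, abs_of_nonneg h] at hz2⟩
    · refine ⟨-z, by simpa using hz1.le, ?_⟩
      rw [map_neg]
      rwa [Real.norm_eq_abs, abs_of_neg h] at hz2
  -- y is a unit vector
  have hy1' : ‖y‖ = 1 := by
    by_contra hcon
    have hylt : ‖y‖ < 1 := lt_of_le_of_ne hy1 hcon
    obtain ⟨e, he1, he2⟩ := hsign k (by linarith)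
    set z := y + (1 - ‖y‖) • e with hzdef
    have hz1 : ‖z‖ ≤ 1 := by
      calc ‖z‖ ≤ ‖y‖ + ‖(1 - ‖y‖) • e‖ := norm_add_le _ _
        _ = ‖y‖ + (1 - ‖y‖) * ‖e‖ := by
            rw [norm_smul, Real.norm_eq_abs, abs_of_nonneg (by linarith)]
        _ ≤ ‖y‖ + (1 - ‖y‖) * 1 := by
            exact add_le_add le_rfl (mul_le_mul_of_nonneg_left he1 (by linarith))
        _ = 1 := by ring
    have hzy : z - y = (1 - ‖y‖) • e := by rw [hzdef]; abel
    have hstrict : k * ‖z - y‖ < f z - f y := by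
      rw [hzy]
      have h1 : f (y + (1 - ‖y‖) • e) = f y + (1 - ‖y‖) * f e := by
        rw [map_add, map_smul, smul_eq_mul]
      rw [hzdef, h1, norm_smul ((1:ℝ) - ‖y‖) e, Real.norm_eq_abs,
        abs_of_nonneg (by linarith : (0:ℝ) ≤ 1 - ‖y‖)]
      have he0 : ‖e‖ ≤ 1 := he1
      have hkek : k * ‖e‖ ≤ k * 1 := mul_le_mul_of_nonneg_left he0 hk0.le
      have hke : k * ‖e‖ < f e := by linarith
      nlinarith [mul_lt_mul_of_pos_left hke (show (0:ℝ) < 1 - ‖y‖ by linarith)]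
    have heq := hymax z hz1 hstrict.le
    have h0 : (1 - ‖y‖) • e = 0 := by rw [← hzy, heq, sub_self]
    have h0' : e ≠ 0 := by intro h; rw [h, map_zero] at he2; linarith
    rcases smul_eq_zero.mp h0 with h | h
    · linarith
    · exact h0' h
  -- support functional
  obtain ⟨v, hvk, hsupp⟩ := support_fn f hk0 hy1 hmax'
  set g₀ : X →L[ℝ] ℝ := f - v with hg₀def
  clear_value g₀
  have hg₀sup : ∀ z : X, ‖z‖ ≤ 1 → g₀ z ≤ g₀ y := by
    intro z hz
    have := hsupp z hz
    simp only [hg₀def, ContinuousLinearMap.sub_apply]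
    linarith
  have hg₀y0 : 0 ≤ g₀ y := by
    have := hg₀sup 0 (by simp)
    simpa using this
  have habs : ∀ z : X, ‖z‖ ≤ 1 → |g₀ z| ≤ g₀ y := by
    intro z hz
    rw [abs_le]
    constructor
    · have := hg₀sup (-z) (by simpa using hz)
      rw [map_neg] at this
      linarith
    · exact hg₀sup z hz
  have hg₀norm : ‖g₀‖ = g₀ y := by
    apply le_antisymm
    · refine g₀.opNorm_le_bound hg₀y0 (fun z => ?_)
      rcases eq_or_ne z 0 with rfl | hz0
      · simp
      · have hz1 : ‖‖z‖⁻¹ • z‖ ≤ 1 := by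
          rw [norm_smul, Real.norm_eq_abs, abs_of_pos (inv_pos.2 (norm_pos_iff.2 hz0)),
            inv_mul_cancel₀ (norm_ne_zero_iff.2 hz0)]
        have h1 := habs _ hz1
        rw [map_smul, smul_eq_mul, abs_mul, abs_of_pos (inv_pos.2 (norm_pos_iff.2 hz0))] at h1
        rw [Real.norm_eq_abs]
        calc |g₀ z| = ‖z‖ * (‖z‖⁻¹ * |g₀ z|) := by
              rw [← mul_assoc, mul_inv_cancel₀ (norm_ne_zero_iff.2 hz0), one_mul]
          _ ≤ ‖z‖ * g₀ y := mul_le_mul_of_nonneg_left h1 (norm_nonneg z)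
          _ = g₀ y * ‖z‖ := mul_comm _ _
    · calc g₀ y ≤ |g₀ y| := le_abs_self _
        _ = ‖g₀ y‖ := rfl
        _ ≤ ‖g₀‖ * ‖y‖ := g₀.le_opNorm y
        _ = ‖g₀‖ := by rw [hy1', mul_one]
  set t : ℝ := ‖g₀‖ with htdef
  clear_value t
  have hg₀y : g₀ y = t := hg₀norm.symm
  have hfg₀ : f - g₀ = v := by rw [hg₀def]; abel
  have hε : ‖f - g₀‖ ≤ k := by rw [hfg₀]; exact hvk
  have htlb : 1 - k ≤ t := by
    have h1 : ‖f‖ - ‖g₀‖ ≤ ‖f - g₀‖ := norm_sub_norm_le f g₀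
    rw [hf] at h1
    linarith
  have ht0 : 0 < t := by linarith
  set g : X →L[ℝ] ℝ := t⁻¹ • g₀ with hgdef
  clear_value g
  have hgnorm : ‖g‖ = 1 := by
    rw [hgdef, norm_smul (t⁻¹) g₀, Real.norm_eq_abs, abs_of_pos (inv_pos.2 ht0), ← htdef,
      inv_mul_cancel₀ (ne_of_gt ht0)]
  have hgy : g y = 1 := by
    rw [hgdef]
    simp only [ContinuousLinearMap.smul_apply, smul_eq_mul]
    rw [hg₀y, inv_mul_cancel₀ (ne_of_gt ht0)]
  refine ⟨y, g, hy1', hgnorm, hgy, hxyδ, ?_⟩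
  -- final estimate
  set ε : ℝ := ‖f - g₀‖ with hεdef
  clear_value ε
  have hst : |t - 1| ≤ ε := by
    have h1 : |‖g₀‖ - ‖f‖| ≤ ‖g₀ - f‖ := abs_norm_sub_norm_le g₀ f
    rw [hf, norm_sub_rev g₀ f, ← htdef, ← hεdef] at h1
    exact h1
  have htg : t • g = g₀ := by rw [hgdef, smul_smul, mul_inv_cancel₀ (ne_of_gt ht0), one_smul]
  have hg₀g : g₀ - g = (t - 1) • g := by rw [← htg]; module
  have hr2 : ‖f - g‖ ≤ ε + |t - 1| := by
    calc ‖f - g‖ = ‖(f - g₀) + (g₀ - g)‖ := by rw [sub_add_sub_cancel]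
      _ ≤ ‖f - g₀‖ + ‖g₀ - g‖ := norm_add_le _ _
      _ = ε + |t - 1| := by
          rw [hg₀g, norm_smul (t - 1) g, Real.norm_eq_abs, hgnorm, mul_one, ← hεdef]
  rcases eq_or_lt_of_le (norm_nonneg (f - g₀)) with hε0 | hε0
  · -- ε = 0
    have h1 : ‖f - g‖ ≤ 0 + |t - 1| := by rw [hεdef] at hr2; rw [← hε0] at hr2; exact hr2
    have h2 : |t - 1| ≤ 0 := by rw [hεdef] at hst; rw [← hε0] at hst; exact hst
    have h3 : ‖f - g‖ ≤ 0 := by linarith [abs_nonneg (t - 1)]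
    linarith [h3, mul_le_mul_of_nonneg_left hα1.le hk0.le]
  · -- ε > 0
    rw [← hεdef] at hε0
    set u : X →L[ℝ] ℝ := ε⁻¹ • (f - g₀) with hudef
    clear_value u
    have hεu : ε • u = f - g₀ := by
      rw [hudef, smul_smul, mul_inv_cancel₀ (ne_of_gt hε0), one_smul]
    have hunorm : ‖u‖ = 1 := by
      rw [hudef, norm_smul (ε⁻¹) (f - g₀), Real.norm_eq_abs, abs_of_pos (inv_pos.2 hε0), ← hεdef,
        inv_mul_cancel₀ (ne_of_gt hε0)]
    set A : ℝ := ‖u + g‖ with hAdef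
    clear_value A
    set B : ℝ := ‖u - g‖ with hBdef
    clear_value B
    have hAB : A + B ≤ 4 - 2*α := by
      rw [hAdef, hBdef]; exact hpair u g (le_of_eq hunorm) (le_of_eq hgnorm)
    have hfdecomp : f = ε • u + t • g := by rw [hεu, htg]; abel
    have hfapply : ∀ e : X, f e = ε * u e + t * g e := by
      intro e
      rw [hfdecomp]
      simp [ContinuousLinearMap.add_apply, ContinuousLinearMap.smul_apply, smul_eq_mul]
    -- B lower bound
    have hB : ε + (t - 1) ≤ ε * B := by
      have h1 : (1 : ℝ) - u y ≤ B := by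
        have h2 : |(u - g) y| ≤ B := by
          calc |(u - g) y| = ‖(u - g) y‖ := rfl
            _ ≤ ‖u - g‖ * ‖y‖ := (u - g).le_opNorm y
            _ = B := by rw [hy1', mul_one, hBdef]
        have h3 : (u - g) y = u y - 1 := by
          rw [ContinuousLinearMap.sub_apply, hgy]
        have h4 : -(u y - 1) ≤ |(u - g) y| := by rw [h3]; exact neg_le_abs _
        linarith
      have h5 : ε * (1 - u y) ≤ ε * B := mul_le_mul_of_nonneg_left h1 hε0.le
      have h6 : f y = ε * u y + t * 1 := by rw [hfapply y, hgy]
      linarith [h5, h6, hfy1]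
    -- A lower bound
    have hA : ε - (t - 1) ≤ ε * A := by
      refine le_of_forall_pos_le_add (fun θ hθ => ?_)
      obtain ⟨e, he1, he2⟩ := hsign (1 - θ) (by linarith)
      have h1 : (u + g) e ≤ A := by
        calc (u + g) e ≤ |(u + g) e| := le_abs_self _
          _ = ‖(u + g) e‖ := rfl
          _ ≤ ‖u + g‖ * ‖e‖ := (u + g).le_opNorm e
          _ ≤ ‖u + g‖ * 1 := mul_le_mul_of_nonneg_left he1 (norm_nonneg _)
          _ = A := by rw [mul_one, hAdef]
      have h2 : g e ≤ 1 := by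
        calc g e ≤ |g e| := le_abs_self _
          _ = ‖g e‖ := rfl
          _ ≤ ‖g‖ * ‖e‖ := g.le_opNorm e
          _ ≤ 1 * 1 := by rw [hgnorm]; exact mul_le_mul_of_nonneg_left he1 zero_le_one
          _ = 1 := one_mul 1
      have h3 : (u + g) e = u e + g e := rfl
      have h4 := hfapply e
      have h5 : ε * (u e + g e) ≤ ε * A := mul_le_mul_of_nonneg_left (h3 ▸ h1) hε0.le
      have hεt : ε ≤ t := by linarith
      have h6 := mul_le_mul_of_nonneg_left h2 (by linarith : (0:ℝ) ≤ t - ε)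
      linarith [h5, h4, h6, he2.le]
    -- decomposition bound
    have hdecomp : f - g = ((ε + (t-1))/2) • (u + g) + ((ε - (t-1))/2) • (u - g) := by
      have h1 : ((ε + (t-1))/2) • (u + g) + ((ε - (t-1))/2) • (u - g)
          = ε • u + (t-1) • g := by module
      rw [h1, hεu, ← hg₀g]
      abel
    have hr1 : ‖f - g‖ ≤ (ε + (t-1))/2 * A + (ε - (t-1))/2 * B := by
      have hs1 : t - 1 ≤ ε := (abs_le.1 hst).2
      have hs2 : -ε ≤ t - 1 := (abs_le.1 hst).1
      calc ‖f - g‖ = ‖((ε + (t-1))/2) • (u + g) + ((ε - (t-1))/2) • (u - g)‖ := by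
            rw [← hdecomp]
        _ ≤ ‖((ε + (t-1))/2) • (u + g)‖ + ‖((ε - (t-1))/2) • (u - g)‖ := norm_add_le _ _
        _ = (ε + (t-1))/2 * A + (ε - (t-1))/2 * B := by
            rw [norm_smul ((ε + (t-1))/2) (u + g), norm_smul ((ε - (t-1))/2) (u - g),
              Real.norm_eq_abs, Real.norm_eq_abs,
              abs_of_nonneg (by linarith : (0:ℝ) ≤ (ε + (t-1))/2),
              abs_of_nonneg (by linarith : (0:ℝ) ≤ (ε - (t-1))/2), hAdef, hBdef]
    have hA0 : 0 ≤ A := by rw [hAdef]; exact norm_nonneg _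
    have hB0 : 0 ≤ B := by rw [hBdef]; exact norm_nonneg _
    exact arith_lemma hk0 hα0 hα1.le hε0 hε (abs_le.1 hst).2 (abs_le.1 hst).1
      hA0 hB0 hAB hA hB hr1 hr2
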